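/- arXiv:1007.4651 — 3 statements merged into one kernel-verified Lean document; each statement's English description precedes it below -/
import Mathlib

section
/- For α > 1/2 there exists a constant K such that for all real r ≥ 1 and all natural numbers n ≥ 0, −(r log r)/2 + r log(n+1) − α n² ≤ K. Consequently, if β > α, then Σ_{n=0}^∞ (n+1)^r e^{−β n²} ≤ C r^{r/2} for some constant C independent of r ≥ 1. -/
open Real

theorem f_bounded_and_series_bound (α β : ℝ) (hα : 1 / 2 < α) (hβ : α < β) :
    (∃ K : ℝ, ∀ r : ℝ, 1 ≤ r → ∀ n : ℕ,
      -(r * Real.log r) / 2 + r * Real.log ((n : ℝ) + 1) - α * (n : ℝ) ^ 2 ≤ K) ∧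
    (∃ C : ℝ, 0 < C ∧ ∀ r : ℝ, 1 ≤ r →
      (∑' n : ℕ, ((n : ℝ) + 1) ^ r * Real.exp (-β * (n : ℝ) ^ 2)) ≤ C * r ^ (r / 2)) := by
  set c := α - 1/2 with hcdef
  have hc0 : 0 < c := by simp only [hcdef]; linarith
  have key : ∀ r : ℝ, 1 ≤ r → ∀ n : ℕ,
      -(r * Real.log r) / 2 + r * Real.log ((n : ℝ) + 1) - α * (n : ℝ) ^ 2 ≤ 1/(4*c) := by
    intro r hr n
    have hrpos : (0:ℝ) < r := lt_of_lt_of_le one_pos hr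
    have hn1 : (0:ℝ) < (n:ℝ) + 1 := by positivity
    have h1 : Real.log (((n:ℝ)+1)^2 / r) ≤ ((n:ℝ)+1)^2 / r - 1 :=
      Real.log_le_sub_one_of_pos (by positivity)
    rw [Real.log_div (by positivity) (ne_of_gt hrpos), Real.log_pow] at h1
    -- h1 : 2 * log(n+1) - log r ≤ (n+1)^2/r - 1
    have h2 : r * (2 * Real.log ((n:ℝ)+1) - Real.log r) ≤ r * (((n:ℝ)+1)^2 / r - 1) := by
      apply mul_le_mul_of_nonneg_left _ hrpos.le
      simpa using h1
    have h3 : r * (((n:ℝ)+1)^2 / r - 1) = ((n:ℝ)+1)^2 - r := by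
      field_simp
    rw [h3] at h2
    -- so r*log(n+1) ≤ r*log r/2 + (n+1)^2/2 - r/2
    have hnn : (0:ℝ) ≤ (n:ℝ) := Nat.cast_nonneg n
    have h4 : -(r * Real.log r) / 2 + r * Real.log ((n : ℝ) + 1) - α * (n : ℝ) ^ 2 ≤
        (n:ℝ) - c * (n:ℝ)^2 := by
      have hc2 : c * (n:ℝ)^2 = α * (n:ℝ)^2 - (n:ℝ)^2 / 2 := by rw [hcdef]; ring
      nlinarith [h2, hr]
    have h5 : (n:ℝ) - c * (n:ℝ)^2 ≤ 1/(4*c) := by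
      rw [le_div_iff₀ (by positivity : (0:ℝ) < 4*c)]
      nlinarith [sq_nonneg (2*c*(n:ℝ) - 1)]
    linarith
  refine ⟨⟨1/(4*c), key⟩, ?_⟩
  set d := β - α with hddef
  have hd0 : 0 < d := by simp only [hddef]; linarith
  set K := 1/(4*c) with hKdef
  have hSsum : Summable (fun n : ℕ => Real.exp (-d * (n:ℝ)^2)) := by
    apply Summable.of_nonneg_of_le (fun n => (Real.exp_pos _).le)
      (fun n => ?_) (summable_geometric_of_lt_one (Real.exp_pos (-d)).le
        (Real.exp_lt_one_iff.mpr (by linarith)))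
    rw [← Real.exp_nat_mul]
    apply Real.exp_le_exp.mpr
    have hnn : n ≤ n^2 := Nat.le_self_pow (by norm_num) n
    have : (n:ℝ) ≤ (n:ℝ)^2 := by exact_mod_cast hnn
    nlinarith
  set S := ∑' n : ℕ, Real.exp (-d * (n:ℝ)^2) with hSdef
  have hSpos : 0 < S := Summable.tsum_pos hSsum (fun n => (Real.exp_pos _).le) 0 (Real.exp_pos _)
  refine ⟨Real.exp K * S, by positivity, ?_⟩
  intro r hr
  have hrpos : (0:ℝ) < r := lt_of_lt_of_le one_pos hr
  have term_le : ∀ n : ℕ, ((n:ℝ)+1) ^ r * Real.exp (-β * (n:ℝ)^2) ≤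
      (Real.exp K * r ^ (r/2)) * Real.exp (-d * (n:ℝ)^2) := by
    intro n
    have hn1 : (0:ℝ) < (n:ℝ) + 1 := by positivity
    rw [Real.rpow_def_of_pos hn1, Real.rpow_def_of_pos hrpos, ← Real.exp_add,
      mul_assoc, ← Real.exp_add, ← Real.exp_add]
    apply Real.exp_le_exp.mpr
    have := key r hr n
    simp only [hddef] at *
    nlinarith [this]
  have hRsum : Summable (fun n : ℕ => (Real.exp K * r ^ (r/2)) * Real.exp (-d * (n:ℝ)^2)) :=
    hSsum.mul_left _
  have hLsum : Summable (fun n : ℕ => ((n:ℝ)+1) ^ r * Real.exp (-β * (n:ℝ)^2)) := by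
    apply Summable.of_nonneg_of_le (fun n => by positivity) term_le hRsum
  calc (∑' n : ℕ, ((n : ℝ) + 1) ^ r * Real.exp (-β * (n : ℝ) ^ 2))
      ≤ ∑' n : ℕ, (Real.exp K * r ^ (r/2)) * Real.exp (-d * (n:ℝ)^2) :=
        Summable.tsum_le_tsum term_le hLsum hRsum
    _ = (Real.exp K * r ^ (r/2)) * S := by rw [tsum_mul_left]
    _ = Real.exp K * S * r ^ (r/2) := by ring
end

section
/- Neo-classical (binomial) inequality: for every real p ≥ 1, all reals a, b ≥ 0, and every natural number k ≥ 1, Σ_{j=0}^{k} a^{j/p} b^{(k−j)/p} / (Γ(j/p + 1) Γ((k−j)/p + 1)) ≤ p² (a+b)^{k/p} / Γ(k/p + 1). -/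
open Real Finset MeasureTheory intervalIntegral

namespace Neo



/-- `2^(1-α) ≤ 2 - α` on `[0,1]` by convexity of `exp`. -/
lemma two_rpow_one_sub_le {α : ℝ} (h0 : 0 ≤ α) (h1 : α ≤ 1) :
    (2:ℝ) ^ (1 - α) ≤ 2 - α := by
  have h2 : (2:ℝ) ^ (1 - α) = Real.exp ((1 - α) * Real.log 2) := by
    rw [Real.rpow_def_of_pos two_pos, mul_comm]
  have hconv := convexOn_exp.2 (Set.mem_univ (Real.log 2)) (Set.mem_univ (0:ℝ))
    (by linarith : (0:ℝ) ≤ 1 - α) h0 (by ring)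
  simp only [smul_eq_mul, mul_zero, add_zero, Real.exp_zero, Real.exp_log two_pos] at hconv
  rw [h2]
  calc Real.exp ((1 - α) * Real.log 2) ≤ (1 - α) * 2 + α * 1 := hconv
    _ = 2 - α := by ring

/-- `1 + α² ≤ 2^α` on `[0,1]`. -/
lemma one_add_sq_le_two_rpow {α : ℝ} (h0 : 0 ≤ α) (h1 : α ≤ 1) :
    1 + α ^ 2 ≤ (2:ℝ) ^ α := by
  have h2 : (2:ℝ) ^ α * (2:ℝ) ^ (1 - α) = 2 := by
    rw [← Real.rpow_add two_pos]; norm_num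
  have h3 := two_rpow_one_sub_le h0 h1
  have h4 : (0:ℝ) < (2:ℝ) ^ (1 - α) := Real.rpow_pos_of_pos two_pos _
  have h5 : (2:ℝ) ^ α ≥ 2 / (2 - α) := by
    rw [ge_iff_le, div_le_iff₀ (by linarith)]
    calc (2:ℝ) = (2:ℝ)^α * (2:ℝ)^(1-α) := h2.symm
      _ ≤ (2:ℝ)^α * (2 - α) := by
          exact mul_le_mul_of_nonneg_left h3 (Real.rpow_nonneg (by norm_num) _)
  refine le_trans ?_ h5
  rw [le_div_iff₀ (by linarith)]
  nlinarith [sq_nonneg (1 - α), sq_nonneg α, mul_nonneg h0 (sq_nonneg (1 - α))]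

/-- `α² ≤ 2^(α-1)` on `(0,1]`. -/
lemma sq_le_two_rpow_sub_one {α : ℝ} (h0 : 0 ≤ α) (h1 : α ≤ 1) :
    α ^ 2 ≤ (2:ℝ) ^ (α - 1) := by
  have h2 : (2:ℝ) ^ (α - 1) = (2:ℝ) ^ α / 2 := by
    rw [Real.rpow_sub two_pos, Real.rpow_one]
  have := one_add_sq_le_two_rpow h0 h1
  rw [h2]
  nlinarith [sq_nonneg (1 - α), sq_nonneg α]

/-- Power mean: `2^(α-1) * (a^α + b^α) ≤ (a+b)^α` for `0 < α ≤ 1`, `a b ≥ 0`. -/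
lemma pow_mean {α a b : ℝ} (h0 : 0 < α) (h1 : α ≤ 1) (ha : 0 ≤ a) (hb : 0 ≤ b) :
    (2:ℝ) ^ (α - 1) * (a ^ α + b ^ α) ≤ (a + b) ^ α := by
  have hp : (1:ℝ) ≤ 1/α := (le_div_iff₀ h0).2 (by linarith)
  have key : a ^ α + b ^ α ≤ (2:ℝ) ^ (1 - α) * (a + b) ^ α := by
    have hN := NNReal.rpow_add_le_mul_rpow_add_rpow (a.toNNReal ^ α) (b.toNNReal ^ α) hp
    have e1 : ∀ x : NNReal, (x ^ α) ^ (1/α) = x := by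
      intro x
      rw [← NNReal.rpow_mul, mul_one_div, div_self h0.ne', NNReal.rpow_one]
    rw [e1, e1] at hN
    -- hN : (a'^α + b'^α) ^ (1/α) ≤ 2 ^ (1/α - 1) * (a' + b')
    have hmono := NNReal.rpow_le_rpow hN (le_of_lt h0)
    rw [← NNReal.rpow_mul] at hmono
    rw [one_div, inv_mul_cancel₀ h0.ne', NNReal.rpow_one] at hmono
    rw [NNReal.mul_rpow, ← NNReal.rpow_mul] at hmono
    have e3 : (α⁻¹ - 1) * α = 1 - α := by field_simp
    rw [e3] at hmono
    -- coerce to ℝ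
    have := NNReal.coe_le_coe.2 hmono
    push_cast at this
    rw [Real.coe_toNNReal a ha, Real.coe_toNNReal b hb] at this
    convert this using 2 <;> norm_num
  calc (2:ℝ) ^ (α - 1) * (a ^ α + b ^ α)
      ≤ (2:ℝ) ^ (α - 1) * ((2:ℝ) ^ (1 - α) * (a + b) ^ α) :=
        mul_le_mul_of_nonneg_left key (Real.rpow_nonneg (by norm_num) _)
    _ = (a + b) ^ α := by
        rw [← mul_assoc, ← Real.rpow_add two_pos]
        norm_num




/-- Real Beta integral on `[0,b]`. -/
lemma beta_real {u v b : ℝ} (hu : 0 < u) (hv : 0 < v) (hb : 0 < b) :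
    ∫ y in (0:ℝ)..b, y ^ (u-1) * (b - y) ^ (v-1)
      = Gamma u * Gamma v / Gamma (u+v) * b ^ (u+v-1) := by
  have hGpos : 0 < Real.Gamma (u+v) := Real.Gamma_pos_of_pos (by linarith)
  have hG : Complex.Gamma ((u:ℂ) + (v:ℂ)) ≠ 0 := by
    rw [show (u:ℂ) + (v:ℂ) = ((u+v : ℝ) : ℂ) by push_cast; ring, Complex.Gamma_ofReal]
    exact_mod_cast hGpos.ne'
  have hscaled := Complex.betaIntegral_scaled (u:ℂ) (v:ℂ) hb
  have hGG := Complex.Gamma_mul_Gamma_eq_betaIntegral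
    (s := (u:ℂ)) (t := (v:ℂ)) (by simpa using hu) (by simpa using hv)
  have hbeta : Complex.betaIntegral (u:ℂ) (v:ℂ)
      = Complex.Gamma (u:ℂ) * Complex.Gamma (v:ℂ) / Complex.Gamma ((u:ℂ)+(v:ℂ)) := by
    rw [hGG]; field_simp
  have hcongr : Set.EqOn (fun y : ℝ => ((y ^ (u-1) * (b - y) ^ (v-1) : ℝ) : ℂ))
      (fun y : ℝ => (y:ℂ) ^ ((u:ℂ) - 1) * ((b:ℂ) - (y:ℂ)) ^ ((v:ℂ) - 1))
      (Set.uIcc (0:ℝ) b) := by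
    intro y hy
    rw [Set.uIcc_of_le hb.le] at hy
    simp only
    rw [Complex.ofReal_mul, Complex.ofReal_cpow hy.1 (u-1),
      Complex.ofReal_cpow (sub_nonneg.2 hy.2) (v-1)]
    push_cast
    ring
  have h1 : ((∫ y in (0:ℝ)..b, y ^ (u-1) * (b - y) ^ (v-1) : ℝ) : ℂ)
      = (b:ℂ) ^ ((u:ℂ) + (v:ℂ) - 1) * Complex.betaIntegral (u:ℂ) (v:ℂ) := by
    rw [← intervalIntegral.integral_ofReal, intervalIntegral.integral_congr hcongr, hscaled]
  rw [hbeta] at h1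
  have h2 : ((Gamma u * Gamma v / Gamma (u+v) * b ^ (u+v-1) : ℝ) : ℂ)
      = (b:ℂ) ^ ((u:ℂ) + (v:ℂ) - 1) *
        (Complex.Gamma (u:ℂ) * Complex.Gamma (v:ℂ) / Complex.Gamma ((u:ℂ)+(v:ℂ))) := by
    rw [Complex.ofReal_mul, Complex.ofReal_div, Complex.ofReal_mul,
      Complex.ofReal_cpow hb.le (u+v-1)]
    rw [show ((u+v-1:ℝ):ℂ) = (u:ℂ)+(v:ℂ)-1 by push_cast; ring]
    rw [← Complex.Gamma_ofReal, ← Complex.Gamma_ofReal, ← Complex.Gamma_ofReal]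
    rw [show ((u+v:ℝ):ℂ) = (u:ℂ)+(v:ℂ) by push_cast; ring]
    ring
  have := h1.trans h2.symm
  exact_mod_cast this

/-- Scaled Beta integral in the convenient form. -/
lemma Ibeta {α m b : ℝ} (hα : 0 < α) (hm : 0 ≤ m) (hb : 0 ≤ b) :
    ∫ y in (0:ℝ)..b, (b - y) ^ (α-1) * y ^ m
      = Gamma α * Gamma (m+1) / Gamma (α+m+1) * b ^ (α+m) := by
  rcases eq_or_lt_of_le hb with rfl | hb'
  · rw [intervalIntegral.integral_same, Real.zero_rpow (by positivity : α+m ≠ 0)]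
    ring
  · have h := beta_real (u := m+1) (v := α) (by linarith) hα hb'
    simp only [add_sub_cancel_right] at h
    calc ∫ y in (0:ℝ)..b, (b - y) ^ (α-1) * y ^ m
        = ∫ y in (0:ℝ)..b, y ^ m * (b - y) ^ (α-1) :=
          intervalIntegral.integral_congr fun y _ => mul_comm _ _
      _ = Gamma (m+1) * Gamma α / Gamma (m+1+α) * b ^ (m+1+α-1) := h
      _ = Gamma α * Gamma (m+1) / Gamma (α+m+1) * b ^ (α+m) := by
          rw [show m+1+α-1 = α+m by ring, show m+1+α = α+m+1 by ring, mul_comm (Gamma (m+1))]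

/-- Integrability of the weighted integrand. -/
lemma II_weight {α b : ℝ} (hα : 0 < α) {g : ℝ → ℝ} (hg : ContinuousOn g (Set.uIcc 0 b)) :
    IntervalIntegrable (fun y => (b - y) ^ (α-1) * g y) volume 0 b := by
  have h1 : IntervalIntegrable (fun y : ℝ => y ^ (α-1)) volume 0 b :=
    intervalIntegrable_rpow' (by linarith)
  have h2 := h1.comp_sub_left b
  simp only [sub_self, sub_zero] at h2
  exact h2.symm.mul_continuousOn hg

noncomputable def ph (ν x : ℝ) : ℝ := x ^ ν / Real.Gamma (ν + 1)

lemma ph_nonneg {ν : ℝ} (hν : 0 ≤ ν) (x : ℝ) (hx : 0 ≤ x) : 0 ≤ ph ν x :=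
  div_nonneg (Real.rpow_nonneg hx ν) (Real.Gamma_pos_of_pos (by linarith)).le

lemma continuous_ph {ν : ℝ} (hν : 0 ≤ ν) : Continuous (ph ν) :=
  (continuous_id.rpow_const (fun _ => Or.inr hν)).div_const _

lemma ph_zero (x : ℝ) : ph 0 x = 1 := by
  simp [ph, Real.rpow_zero, Real.Gamma_one]

/-- Fractional integration shifts `ph ν` to `ph (ν+α)`. -/
lemma int_ph {α ν b : ℝ} (hα : 0 < α) (hν : 0 ≤ ν) (hb : 0 ≤ b) :
    ∫ y in (0:ℝ)..b, (b - y) ^ (α-1) * ph ν y = Gamma α * ph (ν+α) b := by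
  have h1 : Real.Gamma (ν+1) ≠ 0 := (Real.Gamma_pos_of_pos (by linarith)).ne'
  have h2 : Real.Gamma (α+ν+1) ≠ 0 := (Real.Gamma_pos_of_pos (by linarith)).ne'
  have : ∀ y : ℝ, (b-y)^(α-1) * ph ν y = (Gamma (ν+1))⁻¹ * ((b-y)^(α-1) * y^ν) := by
    intro y; simp only [ph]; ring
  simp_rw [this]
  rw [intervalIntegral.integral_const_mul, Ibeta hα hν hb]
  simp only [ph]
  rw [show ν + α = α + ν from add_comm _ _]
  field_simp

noncomputable def FF (α : ℝ) (k : ℕ) (a b : ℝ) : ℝ :=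
  ∑ j ∈ range (k+1), ph (j*α) a * ph ((k-j : ℕ)*α) b

lemma FF_recursion {α : ℝ} (hα : 0 < α) (k : ℕ) (a : ℝ) {b : ℝ} (hb : 0 ≤ b) :
    FF α (k+1) a b = ph ((k+1)*α) a
      + (Gamma α)⁻¹ * ∫ y in (0:ℝ)..b, (b - y) ^ (α-1) * FF α k a y := by
  have hΓ : Real.Gamma α ≠ 0 := (Real.Gamma_pos_of_pos hα).ne'
  have hint : ∀ j ∈ range (k+1), IntervalIntegrable
      (fun y => (b - y) ^ (α-1) * (ph (j*α) a * ph ((k-j : ℕ)*α) y)) volume 0 b := by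
    intro j _
    exact II_weight hα ((continuous_const.mul (continuous_ph (by positivity))).continuousOn)
  have hI : (∫ y in (0:ℝ)..b, (b-y)^(α-1) * FF α k a y)
      = ∑ j ∈ range (k+1), ph (j*α) a * (Gamma α * ph ((k-j : ℕ)*α + α) b) := by
    unfold FF
    simp_rw [Finset.mul_sum]
    rw [intervalIntegral.integral_finset_sum hint]
    refine Finset.sum_congr rfl fun j hj => ?_
    have : ∀ y : ℝ, (b-y)^(α-1) * (ph (j*α) a * ph ((k-j : ℕ)*α) y)
        = ph (j*α) a * ((b-y)^(α-1) * ph ((k-j : ℕ)*α) y) := fun y => by ring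
    simp_rw [this]
    rw [intervalIntegral.integral_const_mul, int_ph hα (by positivity) hb]
  rw [hI, Finset.mul_sum]
  have hterm : ∀ j ∈ range (k+1),
      (Gamma α)⁻¹ * (ph (j*α) a * (Gamma α * ph ((k-j : ℕ)*α + α) b))
        = ph (j*α) a * ph ((k+1-j : ℕ)*α) b := by
    intro j hj
    have hjk : j ≤ k := Nat.lt_succ_iff.mp (Finset.mem_range.mp hj)
    have hcast : ((k-j : ℕ):ℝ)*α + α = ((k+1-j : ℕ):ℝ)*α := by
      rw [Nat.cast_sub hjk, Nat.cast_sub (by omega : j ≤ k+1)]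
      push_cast; ring
    rw [hcast]
    field_simp
  rw [Finset.sum_congr rfl hterm]
  unfold FF
  rw [Finset.sum_range_succ (fun j => ph (j*α) a * ph ((k+1-j : ℕ)*α) b) (k+1)]
  simp only [Nat.sub_self, Nat.cast_zero, zero_mul, ph_zero, mul_one]
  push_cast
  ring




lemma max_zero_eq (x : ℝ) : max x 0 = (x + |x|) / 2 := by
  rcases le_total x 0 with h | h
  · rw [max_eq_right h, abs_of_nonpos h]; ring
  · rw [max_eq_left h, abs_of_nonneg h]; ring

section key2
variable {α s a b : ℝ}

lemma key2 (hα0 : 0 < α) (hα1 : α ≤ 1) (hs : 0 ≤ s) (ha : 0 ≤ a) (hb : 0 ≤ b) :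
    (2:ℝ)^(α-1) * ∫ z in (0:ℝ)..a, (a - z)^(α-1) * z^s
      ≤ (∫ z in (0:ℝ)..a, (a + b - z)^(α-1) * z^s) + (2^(α-1) - α^2) * (a^s * b^α) / α := by
  have hc2 : (0:ℝ) ≤ 2^(α-1) - α^2 := by
    have := sq_le_two_rpow_sub_one hα0.le hα1; linarith
  have hzs_cont : Continuous (fun z : ℝ => z ^ s) :=
    continuous_id.rpow_const (fun _ => Or.inr hs)
  rcases eq_or_lt_of_le ha with rfl | ha'
  · simp only [intervalIntegral.integral_same, mul_zero, zero_add]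
    positivity
  rcases eq_or_lt_of_le hb with rfl | hb'
  · rw [Real.zero_rpow hα0.ne']
    simp only [add_zero, mul_zero, zero_div]
    have hnn : (0:ℝ) ≤ ∫ z in (0:ℝ)..a, (a - z)^(α-1) * z^s := by
      apply intervalIntegral.integral_nonneg ha
      intro z hz
      exact mul_nonneg (Real.rpow_nonneg (by linarith [hz.2]) _) (Real.rpow_nonneg hz.1 _)
    have h1 : (2:ℝ)^(α-1) ≤ 1 :=
      Real.rpow_le_one_of_one_le_of_nonpos one_le_two (by linarith)
    nlinarith
  -- main case : 0 < a, 0 < b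
  set diff : ℝ → ℝ := fun u => 2^(α-1) * u^(α-1) - (u+b)^(α-1) with hdiff
  set g : ℝ → ℝ := fun u => max (diff u) 0 with hgdef
  have hg_nonneg : ∀ u, 0 ≤ g u := fun u => le_max_right _ _
  -- continuity of (u+b)^(α-1) on nonneg sets
  have hub_cont : ∀ t : ℝ, 0 ≤ t → ContinuousOn (fun u : ℝ => (u+b)^(α-1)) (Set.uIcc 0 t) := by
    intro t ht
    apply ContinuousOn.rpow_const ((continuous_id.add continuous_const).continuousOn)
    intro u hu
    rw [Set.uIcc_of_le ht] at hu
    exact Or.inl (by simp only [Pi.add_apply, id_eq]; nlinarith [hu.1])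
  -- integrability
  have IIdiff : ∀ t : ℝ, 0 ≤ t → IntervalIntegrable diff volume 0 t := by
    intro t ht
    apply IntervalIntegrable.sub
    · exact (intervalIntegrable_rpow' (by linarith)).const_mul _
    · exact (hub_cont t ht).intervalIntegrable
  have IIg : ∀ t : ℝ, 0 ≤ t → IntervalIntegrable g volume 0 t := by
    intro t ht
    have : g = fun u => (diff u + |diff u|) / 2 := funext fun u => max_zero_eq _
    rw [this]
    exact ((IIdiff t ht).add (IIdiff t ht).abs).div_const 2
  -- Step A : pointwise bound
  have stepA : ∀ z ∈ Set.Icc (0:ℝ) a,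
      2^(α-1) * ((a - z)^(α-1) * z^s) ≤ (a + b - z)^(α-1) * z^s + a^s * g (a-z) := by
    intro z hz
    have hu0 : 0 ≤ a - z := by linarith [hz.2]
    have habz : a + b - z = (a - z) + b := by ring
    have hzs : z^s ≤ a^s := Real.rpow_le_rpow hz.1 hz.2 hs
    have hzs0 : 0 ≤ z^s := Real.rpow_nonneg hz.1 _
    have has0 : 0 ≤ a^s := Real.rpow_nonneg ha _
    rw [habz]
    rcases le_or_gt (2^(α-1) * (a-z)^(α-1)) (((a-z)+b)^(α-1)) with h | h
    · have h1 : 2^(α-1) * ((a-z)^(α-1) * z^s) ≤ ((a-z)+b)^(α-1) * z^s := by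
        rw [← mul_assoc]
        exact mul_le_mul_of_nonneg_right h hzs0
      have h2 : 0 ≤ a^s * g (a-z) := mul_nonneg has0 (hg_nonneg _)
      linarith
    · have hd : 0 ≤ diff (a-z) := by simp only [hdiff]; linarith
      have hgu : g (a-z) = diff (a-z) := max_eq_left hd
      have h1 : diff (a-z) * z^s ≤ diff (a-z) * a^s := mul_le_mul_of_nonneg_left hzs hd
      have : 2^(α-1) * ((a-z)^(α-1) * z^s) = ((a-z)+b)^(α-1) * z^s + diff (a-z) * z^s := by
        simp only [hdiff]; ring
      rw [this, hgu]
      nlinarith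
  -- integrability of both sides on [0,a]
  have hIL : IntervalIntegrable (fun z => 2^(α-1) * ((a - z)^(α-1) * z^s)) volume 0 a :=
    (II_weight hα0 hzs_cont.continuousOn).const_mul _
  have hgcomp : IntervalIntegrable (fun z => g (a - z)) volume 0 a := by
    have h := (IIg a ha).comp_sub_left a
    simp only [sub_self, sub_zero] at h
    exact (by simpa using h : IntervalIntegrable (fun x => g (a-x)) volume a 0).symm
  have hIR1 : IntervalIntegrable (fun z => (a + b - z)^(α-1) * z^s) volume 0 a := by
    apply ContinuousOn.intervalIntegrable
    apply ContinuousOn.mul _ hzs_cont.continuousOn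
    apply ContinuousOn.rpow_const ((continuous_const.sub continuous_id).continuousOn)
    intro z hz
    rw [Set.uIcc_of_le ha] at hz
    exact Or.inl (by simp only [Pi.sub_apply, id_eq]; nlinarith [hz.2])
  have hIR : IntervalIntegrable (fun z => (a + b - z)^(α-1) * z^s + a^s * g (a-z)) volume 0 a :=
    hIR1.add (hgcomp.const_mul _)
  -- Step B : integrate
  have stepB := intervalIntegral.integral_mono_on ha hIL hIR stepA
  rw [intervalIntegral.integral_const_mul] at stepB
  rw [intervalIntegral.integral_add hIR1 (hgcomp.const_mul _),
    intervalIntegral.integral_const_mul] at stepB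
  -- Step C : change of variables in the g-integral
  have stepC : (∫ z in (0:ℝ)..a, g (a - z)) = ∫ u in (0:ℝ)..a, g u := by
    have h := intervalIntegral.integral_comp_sub_left (a := (0:ℝ)) (b := a) g a
    simpa using h
  rw [stepC] at stepB
  -- Step D : ∫₀^a g ≤ ∫₀^b diff
  have hg_zero_of_ge : ∀ u : ℝ, b ≤ u → g u = 0 := by
    intro u hu
    have hu0 : 0 < u := lt_of_lt_of_le hb' hu
    apply max_eq_right
    have h1 : ((2:ℝ)*u)^(α-1) ≤ (u+b)^(α-1) := by
      apply Real.rpow_le_rpow_of_nonpos (by linarith) (by linarith) (by linarith)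
    have h2 : ((2:ℝ)*u)^(α-1) = 2^(α-1) * u^(α-1) :=
      Real.mul_rpow (by norm_num) hu0.le
    simp only [hdiff]
    rw [← h2]
    linarith
  have hdiff_nonneg : ∀ u : ℝ, 0 < u → u ≤ b → 0 ≤ diff u := by
    intro u hu0 hub
    have h1 : ((u:ℝ)+b)^(α-1) ≤ (2*u)^(α-1) := by
      apply Real.rpow_le_rpow_of_nonpos (by linarith) (by linarith) (by linarith)
    have h2 : ((2:ℝ)*u)^(α-1) = 2^(α-1) * u^(α-1) :=
      Real.mul_rpow (by norm_num) hu0.le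
    simp only [hdiff]
    rw [← h2]
    linarith
  have stepD1 : (∫ u in (0:ℝ)..a, g u) ≤ ∫ u in (0:ℝ)..b, g u := by
    rcases le_total a b with hab | hab
    · have hsplit := intervalIntegral.integral_add_adjacent_intervals
        (IIg a ha) ((IIg b hb).mono_set (by
          rw [Set.uIcc_of_le hab, Set.uIcc_of_le hb]
          exact Set.Icc_subset_Icc ha le_rfl) : IntervalIntegrable g volume a b)
      have hpos : 0 ≤ ∫ u in a..b, g u :=
        intervalIntegral.integral_nonneg hab (fun u _ => hg_nonneg u)
      linarith [hsplit]
    · have hsplit := intervalIntegral.integral_add_adjacent_intervals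
        (IIg b hb) ((IIg a ha).mono_set (by
          rw [Set.uIcc_of_le hab, Set.uIcc_of_le ha]
          exact Set.Icc_subset_Icc hb le_rfl) : IntervalIntegrable g volume b a)
      have hzero : (∫ u in b..a, g u) = 0 := by
        have : Set.EqOn g 0 (Set.uIcc b a) := by
          intro u hu
          rw [Set.uIcc_of_le hab] at hu
          exact hg_zero_of_ge u hu.1
        rw [intervalIntegral.integral_congr this]
        simp
      linarith [hsplit]
  have stepD2 : (∫ u in (0:ℝ)..b, g u) = ∫ u in (0:ℝ)..b, diff u := by
    rw [intervalIntegral.integral_of_le hb, intervalIntegral.integral_of_le hb]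
    apply MeasureTheory.setIntegral_congr_fun measurableSet_Ioc
    intro u hu
    exact max_eq_left (hdiff_nonneg u hu.1 hu.2)
  -- Step E : evaluate ∫₀^b diff
  have hval1 : (∫ u in (0:ℝ)..b, 2^(α-1) * u^(α-1)) = 2^(α-1) * (b^α / α) := by
    rw [intervalIntegral.integral_const_mul, integral_rpow (Or.inl (by linarith))]
    rw [Real.zero_rpow (by linarith : α - 1 + 1 ≠ 0)]
    ring_nf
  have hval2 : (∫ u in (0:ℝ)..b, (u+b)^(α-1)) = ((2*b)^α - b^α) / α := by
    have h := intervalIntegral.integral_comp_add_right (a := (0:ℝ)) (b := b) (fun x : ℝ => x^(α-1)) b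
    simp only [zero_add] at h
    rw [h, integral_rpow (Or.inl (by linarith))]
    rw [show b + b = 2*b by ring]
    ring_nf
  have hdiffval : (∫ u in (0:ℝ)..b, diff u) = (2^(α-1) - 2^α + 1) * b^α / α := by
    have hsub : (∫ u in (0:ℝ)..b, diff u)
        = (∫ u in (0:ℝ)..b, 2^(α-1) * u^(α-1)) - ∫ u in (0:ℝ)..b, (u+b)^(α-1) := by
      apply intervalIntegral.integral_sub
      · exact (intervalIntegrable_rpow' (by linarith)).const_mul _
      · exact (hub_cont b hb).intervalIntegrable
    rw [hsub, hval1, hval2, Real.mul_rpow (by norm_num) hb]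
    have h2a : (2:ℝ)^α = 2^(α-1) * 2 := by
      rw [Real.rpow_sub two_pos, Real.rpow_one]; ring
    field_simp
    ring
  -- Put everything together
  have hba : (0:ℝ) ≤ b^α := Real.rpow_nonneg hb _
  have has : (0:ℝ) ≤ a^s := Real.rpow_nonneg ha _
  have hfinal : a^s * (∫ u in (0:ℝ)..b, diff u) ≤ (2^(α-1) - α^2) * (a^s * b^α) / α := by
    rw [hdiffval]
    have hkey : 2^(α-1) - 2^α + 1 ≤ 2^(α-1) - α^2 := by
      have := one_add_sq_le_two_rpow hα0.le hα1; linarith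
    have hprod : (0:ℝ) ≤ a^s * b^α := mul_nonneg has hba
    have hnum : (2^(α-1) - 2^α + 1) * (a^s * b^α) ≤ (2^(α-1) - α^2) * (a^s * b^α) :=
      mul_le_mul_of_nonneg_right hkey hprod
    calc a^s * ((2^(α-1) - 2^α + 1) * b^α / α)
        = (2^(α-1) - 2^α + 1) * (a^s * b^α) / α := by ring
      _ ≤ (2^(α-1) - α^2) * (a^s * b^α) / α := by
          rw [div_le_div_iff₀ hα0 hα0]
          exact mul_le_mul_of_nonneg_right hnum hα0.le
  have hmul : a^s * (∫ u in (0:ℝ)..a, g u) ≤ a^s * ∫ u in (0:ℝ)..b, diff u :=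
    mul_le_mul_of_nonneg_left (stepD1.trans stepD2.le) has
  calc (2:ℝ)^(α-1) * ∫ z in (0:ℝ)..a, (a - z)^(α-1) * z^s
      ≤ (∫ z in (0:ℝ)..a, (a + b - z)^(α-1) * z^s) + a^s * ∫ u in (0:ℝ)..a, g u := stepB
    _ ≤ (∫ z in (0:ℝ)..a, (a + b - z)^(α-1) * z^s) + (2^(α-1) - α^2) * (a^s * b^α) / α := by
        linarith

end key2



set_option maxHeartbeats 1000000 in
lemma Hmain {α : ℝ} (hα0 : 0 < α) (hα1 : α ≤ 1) :
    ∀ k : ℕ, 1 ≤ k → ∀ a b : ℝ, 0 ≤ a → 0 ≤ b →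
      FF α k a b + (2^(α-1)/α^2 - 1) * (ph ((k:ℝ)*α) a + ph ((k:ℝ)*α) b)
        ≤ (1/α^2) * ph ((k:ℝ)*α) (a+b) := by
  have hΓα : (0:ℝ) < Gamma α := Real.Gamma_pos_of_pos hα0
  have hc0 : (0:ℝ) ≤ 2^(α-1)/α^2 - 1 := by
    have := sq_le_two_rpow_sub_one hα0.le hα1
    have hα2 : (0:ℝ) < α^2 := by positivity
    rw [sub_nonneg, le_div_iff₀ hα2]
    linarith
  intro k hk
  induction k, hk using Nat.le_induction with
  | base =>
    intro a b ha hb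
    have e : FF α 1 a b = ph α a + ph α b := by
      simp only [FF, Finset.sum_range_succ, Finset.sum_range_one]
      norm_num [ph_zero]
      ring
    have hcast : ((1:ℕ):ℝ)*α = α := by norm_num
    rw [hcast, e]
    have hpm := pow_mean hα0 hα1 ha hb
    have hΓ1 : (0:ℝ) < Gamma (α+1) := Real.Gamma_pos_of_pos (by linarith)
    have hD : (0:ℝ) < α^2 * Gamma (α+1) := by positivity
    have h1 : ph α a + ph α b + (2^(α-1)/α^2 - 1) * (ph α a + ph α b)
        = (2^(α-1) * (a^α + b^α)) / (α^2 * Gamma (α+1)) := by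
      simp only [ph]; field_simp; ring
    have h2 : (1/α^2) * ph α (a+b) = (a+b)^α / (α^2 * Gamma (α+1)) := by
      simp only [ph]; field_simp
    rw [h1, h2, div_le_div_iff₀ hD hD]
    exact mul_le_mul_of_nonneg_right hpm hD.le
  | succ k hk IH =>
    intro a b ha hb
    set c : ℝ := 2^(α-1)/α^2 - 1 with hc_def
    set s : ℝ := (k:ℝ)*α with hs_def
    have hs : 0 ≤ s := by positivity
    have hcast : ((k+1:ℕ):ℝ)*α = s+α := by push_cast; ring
    have hcast2 : ((k:ℝ)+1)*α = s+α := by rw [hs_def]; ring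
    have hΓs : (0:ℝ) < Gamma (s+1) := Real.Gamma_pos_of_pos (by linarith)
    have hΓsα : (0:ℝ) < Gamma (s+α+1) := Real.Gamma_pos_of_pos (by linarith)
    have hΓα1 : (0:ℝ) < Gamma (α+1) := Real.Gamma_pos_of_pos (by linarith)
    have hGadd : Gamma (α+1) = α * Gamma α := Real.Gamma_add_one hα0.ne'
    rw [FF_recursion hα0 k a hb, hcast, hcast2]
    rcases eq_or_lt_of_le hb with rfl | hb'
    · -- b = 0 case
      simp only [intervalIntegral.integral_same, mul_zero, add_zero]
      have hph0 : ph (s+α) 0 = 0 := by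
        simp only [ph]
        rw [Real.zero_rpow (by positivity : s+α ≠ 0), zero_div]
      rw [hph0, add_zero]
      have hpa : 0 ≤ ph (s+α) a := ph_nonneg (by positivity) a ha
      have h21 : (2:ℝ)^(α-1) ≤ 1 :=
        Real.rpow_le_one_of_one_le_of_nonpos one_le_two (by linarith)
      have hα2 : (0:ℝ) < α^2 := by positivity
      have h22 : (2:ℝ)^(α-1) / α^2 ≤ 1/α^2 := by gcongr
      have : 1 + c ≤ 1/α^2 := by rw [hc_def]; linarith
      nlinarith [hpa]
    -- main case 0 < b
    -- continuity helpers
    have contFF : Continuous (fun y => FF α k a y) := by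
      unfold FF
      exact continuous_finset_sum _ (fun j _ =>
        continuous_const.mul (continuous_ph (by positivity)))
    have contG : Continuous (fun y : ℝ =>
        (1/α^2) * ph s (a+y) - c * ph s a - c * ph s y) := by
      apply Continuous.sub
      apply Continuous.sub
      · exact continuous_const.mul ((continuous_ph hs).comp (continuous_const.add continuous_id))
      · exact continuous_const
      · exact continuous_const.mul (continuous_ph hs)
    -- integral monotonicity
    have hIL : IntervalIntegrable (fun y => (b - y)^(α-1) * FF α k a y) volume 0 b :=
      II_weight hα0 contFF.continuousOn
    have hIR : IntervalIntegrable (fun y => (b - y)^(α-1) *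
        ((1/α^2) * ph s (a+y) - c * ph s a - c * ph s y)) volume 0 b :=
      II_weight hα0 contG.continuousOn
    have hmono := intervalIntegral.integral_mono_on hb hIL hIR (fun y hy => by
      have hw : (0:ℝ) ≤ (b - y)^(α-1) := Real.rpow_nonneg (by linarith [hy.2]) _
      have hIH := IH a y ha hy.1
      exact mul_le_mul_of_nonneg_left (by rw [hs_def]; linarith [hIH]) hw)
    -- evaluate the RHS integral
    set W : ℝ := ∫ y in (0:ℝ)..b, (b - y)^(α-1) * (a+y)^s with hW_def
    have hRHSval : (∫ y in (0:ℝ)..b, (b - y)^(α-1) *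
        ((1/α^2) * ph s (a+y) - c * ph s a - c * ph s y))
        = (1/(α^2 * Gamma (s+1))) * W
          - (c * ph s a) * (Gamma α * ph α b) - c * (Gamma α * ph (s+α) b) := by
      have hint1 : IntervalIntegrable
          (fun y => (1/(α^2 * Gamma (s+1))) * ((b - y)^(α-1) * (a+y)^s)) volume 0 b := by
        apply IntervalIntegrable.const_mul
        apply II_weight hα0
        exact ((continuous_const.add continuous_id).rpow_const (fun _ => Or.inr hs)).continuousOn
      have hint2 : IntervalIntegrable
          (fun y => (c * ph s a) * ((b - y)^(α-1) * ph 0 y)) volume 0 b :=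
        ((II_weight hα0 (continuous_ph le_rfl).continuousOn).const_mul _)
      have hint3 : IntervalIntegrable
          (fun y => c * ((b - y)^(α-1) * ph s y)) volume 0 b :=
        ((II_weight hα0 (continuous_ph hs).continuousOn).const_mul _)
      have heqfun : ∀ y : ℝ, (b - y)^(α-1) *
          ((1/α^2) * ph s (a+y) - c * ph s a - c * ph s y)
          = (1/(α^2 * Gamma (s+1))) * ((b - y)^(α-1) * (a+y)^s)
            - (c * ph s a) * ((b - y)^(α-1) * ph 0 y)
            - c * ((b - y)^(α-1) * ph s y) := by
        intro y
        rw [ph_zero]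
        simp only [ph]
        field_simp
      simp_rw [heqfun]
      rw [intervalIntegral.integral_sub (hint1.sub hint2) hint3,
        intervalIntegral.integral_sub hint1 hint2,
        intervalIntegral.integral_const_mul, intervalIntegral.integral_const_mul,
        intervalIntegral.integral_const_mul,
        int_ph hα0 le_rfl hb, int_ph hα0 hs hb]
      rw [show (0:ℝ) + α = α by ring]
    -- decompose W
    have hIIab : IntervalIntegrable (fun z => (a + b - z)^(α-1) * z^s) volume 0 (a+b) := by
      have := II_weight (b := a+b) hα0
        (continuous_id.rpow_const (fun _ => Or.inr hs)).continuousOn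
      exact this
    have hII0a : IntervalIntegrable (fun z => (a + b - z)^(α-1) * z^s) volume 0 a :=
      hIIab.mono_set (by
        rw [Set.uIcc_of_le ha, Set.uIcc_of_le (by linarith : (0:ℝ) ≤ a+b)]
        exact Set.Icc_subset_Icc le_rfl (by linarith))
    have hIIaab : IntervalIntegrable (fun z => (a + b - z)^(α-1) * z^s) volume a (a+b) :=
      hIIab.mono_set (by
        rw [Set.uIcc_of_le (by linarith : a ≤ a+b), Set.uIcc_of_le (by linarith : (0:ℝ) ≤ a+b)]
        exact Set.Icc_subset_Icc ha le_rfl)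
    set V : ℝ := ∫ z in (0:ℝ)..a, (a + b - z)^(α-1) * z^s with hV_def
    have hW : W = Gamma α * Gamma (s+1) / Gamma (α+s+1) * (a+b)^(α+s) - V := by
      have hcongr : (∫ y in (0:ℝ)..b, (b - y)^(α-1) * (a+y)^s)
          = ∫ y in (0:ℝ)..b, (fun z => (a + b - z)^(α-1) * z^s) (a + y) := by
        apply intervalIntegral.integral_congr
        intro y _
        simp only
        rw [show a + b - (a + y) = b - y by ring]
      have hshift := intervalIntegral.integral_comp_add_left (a := (0:ℝ)) (b := b)
        (fun z => (a + b - z)^(α-1) * z^s) a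
      have hadj := intervalIntegral.integral_add_adjacent_intervals hII0a hIIaab
      have hbeta := Ibeta hα0 hs (by linarith : (0:ℝ) ≤ a+b)
      rw [hW_def, hcongr, hshift, add_zero]
      rw [← hbeta, ← hadj]
      rw [hV_def]
      ring
    -- key inequality
    have hkey := key2 hα0 hα1 hs ha hb
    rw [← hV_def] at hkey
    have hbeta0a : (∫ z in (0:ℝ)..a, (a - z)^(α-1) * z^s)
        = Gamma α * Gamma (s+1) / Gamma (α+s+1) * a^(α+s) := Ibeta hα0 hs ha
    rw [hbeta0a] at hkey
    -- assemble everything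
    have hw1 : (Gamma α)⁻¹ * (∫ y in (0:ℝ)..b, (b - y)^(α-1) * FF α k a y)
        ≤ (Gamma α)⁻¹ * ((1/(α^2 * Gamma (s+1))) * W
          - (c * ph s a) * (Gamma α * ph α b) - c * (Gamma α * ph (s+α) b)) := by
      apply mul_le_mul_of_nonneg_left _ (by positivity)
      rw [← hRHSval]
      exact hmono
    have hVbound : (1/(α^2 * Gamma α * Gamma (s+1))) *
          (Gamma α * Gamma (s+1) / Gamma (α+s+1) * (a+b)^(α+s) - V)
        ≤ (1/(α^2 * Gamma α * Gamma (s+1))) *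
          (Gamma α * Gamma (s+1) / Gamma (α+s+1) * (a+b)^(α+s)
            - (2^(α-1) * (Gamma α * Gamma (s+1) / Gamma (α+s+1) * a^(α+s))
              - (2^(α-1) - α^2) * (a^s * b^α) / α)) := by
      apply mul_le_mul_of_nonneg_left _ (by positivity)
      linarith [hkey]
    -- final field identity
    have hfinal_eq : ph (s+α) a + ((1/(α^2 * Gamma α * Gamma (s+1))) *
          (Gamma α * Gamma (s+1) / Gamma (α+s+1) * (a+b)^(α+s)
            - (2^(α-1) * (Gamma α * Gamma (s+1) / Gamma (α+s+1) * a^(α+s))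
              - (2^(α-1) - α^2) * (a^s * b^α) / α))
          - c * ph s a * ph α b - c * ph (s+α) b)
          + c * (ph (s+α) a + ph (s+α) b)
        = (1/α^2) * ph (s+α) (a+b) := by
      simp only [ph, hc_def]
      rw [hGadd]
      rw [show s + α + 1 = α + s + 1 by ring]
      field_simp
      ring
    -- combine
    have hw2 : (Gamma α)⁻¹ * ((1/(α^2 * Gamma (s+1))) * W
          - (c * ph s a) * (Gamma α * ph α b) - c * (Gamma α * ph (s+α) b))
        = (1/(α^2 * Gamma α * Gamma (s+1))) *
            (Gamma α * Gamma (s+1) / Gamma (α+s+1) * (a+b)^(α+s) - V)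
          - c * ph s a * ph α b - c * ph (s+α) b := by
      rw [hW]
      field_simp
    linarith [hw1, hVbound, hfinal_eq, hw2]

end Neo


open Real Finset

theorem neoclassical_inequality (p : ℝ) (hp : 1 ≤ p) (a b : ℝ)
    (ha : 0 ≤ a) (hb : 0 ≤ b) (k : ℕ) (hk : 1 ≤ k) :
    ∑ j ∈ Finset.range (k + 1),
        a ^ ((j : ℝ) / p) * b ^ (((k : ℝ) - (j : ℝ)) / p) /
          (Real.Gamma ((j : ℝ) / p + 1) * Real.Gamma (((k : ℝ) - (j : ℝ)) / p + 1)) ≤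
      p ^ 2 * (a + b) ^ ((k : ℝ) / p) / Real.Gamma ((k : ℝ) / p + 1) := by
  have hp0 : (0:ℝ) < p := lt_of_lt_of_le one_pos hp
  set α : ℝ := 1/p with hα_def
  have hα0 : 0 < α := by positivity
  have hα1 : α ≤ 1 := by rw [hα_def, div_le_one hp0]; exact hp
  have hmain := Neo.Hmain hα0 hα1 k hk a b ha hb
  have hsum : (∑ j ∈ Finset.range (k + 1),
        a ^ ((j : ℝ) / p) * b ^ (((k : ℝ) - (j : ℝ)) / p) /
          (Real.Gamma ((j : ℝ) / p + 1) * Real.Gamma (((k : ℝ) - (j : ℝ)) / p + 1)))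
      = Neo.FF α k a b := by
    apply Finset.sum_congr rfl
    intro j hj
    have hjk : j ≤ k := Nat.lt_succ_iff.mp (Finset.mem_range.mp hj)
    have e1 : (j:ℝ)/p = (j:ℝ)*α := by rw [hα_def]; ring
    have e2 : ((k:ℝ)-(j:ℝ))/p = ((k-j : ℕ):ℝ)*α := by
      rw [hα_def, Nat.cast_sub hjk]; ring
    rw [e1, e2]
    simp only [Neo.ph]
    rw [div_mul_div_comm]
  have hrhs : p ^ 2 * (a + b) ^ ((k : ℝ) / p) / Real.Gamma ((k : ℝ) / p + 1)
      = (1/α^2) * Neo.ph ((k:ℝ)*α) (a+b) := by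
    have e3 : (k:ℝ)/p = (k:ℝ)*α := by rw [hα_def]; ring
    rw [e3]
    simp only [Neo.ph]
    have : (1:ℝ)/α^2 = p^2 := by rw [hα_def]; field_simp
    rw [this]
    ring
  rw [hsum, hrhs]
  have hc0 : (0:ℝ) ≤ 2^(α-1)/α^2 - 1 := by
    have := Neo.sq_le_two_rpow_sub_one hα0.le hα1
    have hα2 : (0:ℝ) < α^2 := by positivity
    rw [sub_nonneg, le_div_iff₀ hα2]
    linarith
  have hpa : 0 ≤ Neo.ph ((k:ℝ)*α) a := Neo.ph_nonneg (by positivity) a ha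
  have hpb : 0 ≤ Neo.ph ((k:ℝ)*α) b := Neo.ph_nonneg (by positivity) b hb
  nlinarith [hmain, mul_nonneg hc0 (add_nonneg hpa hpb)]
end

section
/- Let (S_P) denote the Riemann-type sums S_P = Σ over partitions P of [s,t], where removing a single well-chosen point t_l from a partition with L ≥ 3 subintervals changes the value by at most D (2/(L−1))^{k/p} for a constant D and fixed k/p > 1. Then for any partition P with L subintervals, ‖S_P − S_{trivial}‖ ≤ D Σ_{m=3}^{L} (2/(m−1))^{k/p} ≤ D(1 + Σ_{m=3}^∞ (2/(m−1))^{k/p}) < ∞, where S_trivial is the sum over the trivial partition {s,t}. -/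
open Real Finset

/-- Telescoping bound over partition sums: if removing a well-chosen interior point
from any partition with `L ≥ 3` subintervals changes the value of `S` by at most
`D (2/(L−1))^{k/p}` (and by at most `D` when `L = 2`), then every partition value is
within `D (1 + Σ_{m=3}^∞ (2/(m−1))^{k/p})` of the value at the trivial partition. -/
theorem telescoping_partition_bound {E : Type*} [NormedAddCommGroup E]
    (k p D : ℝ) (hkp : 1 < k / p) (hD : 0 < D)
    (s t : ℝ) (hst : s < t)
    (S : Finset ℝ → E)
    (hdrop3 : ∀ P : Finset ℝ, s ∈ P → t ∈ P → 4 ≤ P.card →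
      ∃ x ∈ P, x ≠ s ∧ x ≠ t ∧
        ‖S P - S (P.erase x)‖ ≤ D * (2 / ((P.card : ℝ) - 2)) ^ (k / p))
    (hdrop2 : ∀ P : Finset ℝ, s ∈ P → t ∈ P → P.card = 3 →
      ∃ x ∈ P, x ≠ s ∧ x ≠ t ∧ ‖S P - S (P.erase x)‖ ≤ D) :
    ∀ P : Finset ℝ, s ∈ P → t ∈ P →
      ‖S P - S {s, t}‖ ≤ D * (1 + ∑' m : ℕ, (2 / ((m : ℝ) + 2)) ^ (k / p)) := by
  have hst' : s ≠ t := ne_of_lt hst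
  set f : ℕ → ℝ := fun m => (2 / ((m : ℝ) + 2)) ^ (k / p) with hf_def
  have hf0 : ∀ m : ℕ, 0 ≤ f m := by
    intro m; apply Real.rpow_nonneg; positivity
  have hsum : Summable f := by
    have h1 : Summable (fun m : ℕ => ((m : ℝ) ^ (k / p))⁻¹) :=
      Real.summable_nat_rpow_inv.mpr hkp
    have h2 : Summable (fun m : ℕ => (((m + 2 : ℕ) : ℝ) ^ (k / p))⁻¹) :=
      (summable_nat_add_iff 2).mpr h1
    apply (h2.mul_left ((2 : ℝ) ^ (k / p))).congr
    intro m
    have hm2 : (0 : ℝ) < ((m : ℕ) : ℝ) + 2 := by positivity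
    have : (((m + 2 : ℕ) : ℝ)) = ((m : ℝ) + 2) := by push_cast; ring
    rw [this, hf_def]
    simp only []
    rw [Real.div_rpow (by norm_num) (le_of_lt hm2), div_eq_mul_inv]
    ring
  -- key inductive claim
  have key : ∀ n : ℕ, ∀ P : Finset ℝ, s ∈ P → t ∈ P → P.card = n →
      ‖S P - S {s, t}‖ ≤ D * (1 + ∑ m ∈ Finset.range (n - 3), f m) := by
    intro n
    induction n using Nat.strong_induction_on with
    | _ n ih =>
      intro P hs ht hcard
      have hsub : ({s, t} : Finset ℝ) ⊆ P := by
        intro x hx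
        simp only [Finset.mem_insert, Finset.mem_singleton] at hx
        rcases hx with rfl | rfl <;> assumption
      have hcard2 : ({s, t} : Finset ℝ).card = 2 := by
        rw [Finset.card_insert_of_notMem (by simpa using hst'), Finset.card_singleton]
      have hn2 : 2 ≤ n := by
        rw [← hcard]
        calc 2 = ({s, t} : Finset ℝ).card := hcard2.symm
        _ ≤ P.card := Finset.card_le_card hsub
      rcases Nat.lt_or_ge n 4 with hn4 | hn4
      · -- n = 2 or n = 3
        interval_cases n
        · -- n = 2 : P = {s, t}
          have : P = {s, t} := (Finset.eq_of_subset_of_card_le hsub (by omega)).symm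
          rw [this, sub_self, norm_zero]
          have hs' : 0 ≤ ∑ m ∈ Finset.range (2 - 3), f m :=
            Finset.sum_nonneg fun m _ => hf0 m
          nlinarith
        · -- n = 3
          obtain ⟨x, hxP, hxs, hxt, hbound⟩ := hdrop2 P hs ht hcard
          have hserase : s ∈ P.erase x := Finset.mem_erase.mpr ⟨(Ne.symm hxs), hs⟩
          have hterase : t ∈ P.erase x := Finset.mem_erase.mpr ⟨(Ne.symm hxt), ht⟩
          have hsub' : ({s, t} : Finset ℝ) ⊆ P.erase x := by
            intro y hy
            simp only [Finset.mem_insert, Finset.mem_singleton] at hy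
            rcases hy with rfl | rfl <;> assumption
          have hcarderase : (P.erase x).card = 2 := by
            rw [Finset.card_erase_of_mem hxP, hcard]
          have herase : P.erase x = {s, t} :=
            (Finset.eq_of_subset_of_card_le hsub' (by omega)).symm
          rw [← herase]
          simp only [Nat.sub_self, Finset.range_zero, Finset.sum_empty, add_zero, mul_one]
          exact hbound
      · -- n ≥ 4
        obtain ⟨x, hxP, hxs, hxt, hbound⟩ := hdrop3 P hs ht (hcard ▸ hn4)
        have hserase : s ∈ P.erase x := Finset.mem_erase.mpr ⟨(Ne.symm hxs), hs⟩
        have hterase : t ∈ P.erase x := Finset.mem_erase.mpr ⟨(Ne.symm hxt), ht⟩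
        have hcarderase : (P.erase x).card = n - 1 := by
          rw [Finset.card_erase_of_mem hxP, hcard]
        have ihe := ih (n - 1) (by omega) (P.erase x) hserase hterase hcarderase
        have htri : ‖S P - S {s, t}‖ ≤ ‖S P - S (P.erase x)‖ + ‖S (P.erase x) - S {s, t}‖ := by
          have := norm_sub_le_norm_sub_add_norm_sub (S P) (S (P.erase x)) (S {s, t})
          exact this
        have hterm : D * (2 / ((P.card : ℝ) - 2)) ^ (k / p) = D * f (n - 4) := by
          congr 1
          rw [hf_def]
          simp only []
          congr 2
          rw [hcard]
          have : ((n - 4 : ℕ) : ℝ) = (n : ℝ) - 4 := by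
            have : (4 : ℕ) ≤ n := hn4
            push_cast [Nat.cast_sub this]
            ring
          rw [this]; ring
        have hsplit : ∑ m ∈ Finset.range (n - 3), f m
            = ∑ m ∈ Finset.range (n - 1 - 3), f m + f (n - 4) := by
          have h1 : n - 3 = (n - 4) + 1 := by omega
          have h2 : n - 1 - 3 = n - 4 := by omega
          rw [h1, Finset.sum_range_succ, h2]
        rw [hsplit]
        calc ‖S P - S {s, t}‖
            ≤ ‖S P - S (P.erase x)‖ + ‖S (P.erase x) - S {s, t}‖ := htri
          _ ≤ D * f (n - 4) + D * (1 + ∑ m ∈ Finset.range (n - 1 - 3), f m) := by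
              apply add_le_add _ ihe
              rw [← hterm]; exact hbound
          _ = D * (1 + (∑ m ∈ Finset.range (n - 1 - 3), f m + f (n - 4))) := by ring
  intro P hs ht
  calc ‖S P - S {s, t}‖ ≤ D * (1 + ∑ m ∈ Finset.range (P.card - 3), f m) :=
        key P.card P hs ht rfl
    _ ≤ D * (1 + ∑' m : ℕ, f m) := by
        apply mul_le_mul_of_nonneg_left _ (le_of_lt hD)
        apply add_le_add le_rfl
        exact Summable.sum_le_tsum _ (fun m _ => hf0 m) hsum
end
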